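/- There exists a 2-factorization of the graph K_24 − I (the complete graph on 24 vertices minus a perfect matching I) having exactly 7 triangle-factors and 4 quadrangle-factors; i.e., the Hamilton–Waterloo problem HWP(24; 3, 4; 7, 4) has a solution. -/
import Mathlib


/-- `H` is a 2-factor of the simple graph `G`: a spanning 2-regular subgraph of `G`
(every vertex has exactly two neighbours in `H`). -/
def IsTwoFactor {V : Type*} (G H : SimpleGraph V) : Prop :=
  H ≤ G ∧ ∀ v : V, (H.neighborSet v).ncard = 2

/-- `H` is a 2-factor of `G` all of whose connected components are cycles of length `n`:
since `H` is 2-regular, this is equivalent to requiring that every connected component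
of `H` has exactly `n` vertices. For `n = 3` this is a triangle-factor, for `n = 4` a
quadrangle-factor. -/
def IsCycleFactor {V : Type*} (G H : SimpleGraph V) (n : ℕ) : Prop :=
  IsTwoFactor G H ∧ ∀ v : V, (H.connectedComponentMk v).supp.ncard = n

/-- `F` is a solution of the Hamilton--Waterloo problem HWP on the graph `G` with `r`
triangle-factors and `s` quadrangle-factors: the `r + s` factors `F i` are 2-factors of `G`
whose edge sets partition the edge set of `G` (every edge of `G` lies in exactly one factor),
the first `r` of them being triangle-factors and the remaining `s` quadrangle-factors. -/
def IsHWPSolution {V : Type*} (G : SimpleGraph V) (r s : ℕ)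
    (F : Fin (r + s) → SimpleGraph V) : Prop :=
  (∀ i : Fin (r + s), (i : ℕ) < r → IsCycleFactor G (F i) 3) ∧
  (∀ i : Fin (r + s), r ≤ (i : ℕ) → IsCycleFactor G (F i) 4) ∧
  (∀ e : Sym2 V, e ∈ G.edgeSet → ∃! i : Fin (r + s), e ∈ (F i).edgeSet)

/- ### An explicit solution of HWP(24; 3, 4; 7, 4)

The vertex set is `Z₂₄`; the removed perfect matching is `{i, i+12}`.
The four quadrangle factors are
`(i, i+1, i+12, i+13)` for `i ∈ {0,2,4,6,8,10}` resp. `i ∈ {1,3,5,7,9,11}`, and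
`(i, i+5, i+12, i+17)` for the same two index sets; they use up all edges of
differences `1, 11, 5, 7`.  The remaining circulant graph of differences
`{2,3,4,6,8,9,10}` is split into seven triangle factors found by a SAT solver.
Below, `nbrs i v` records the two neighbours of vertex `v` in factor `i`
(factors 0–6 are the triangle factors, 7–10 the quadrangle factors). -/

def nbrs : Fin 11 → Fin 24 → Fin 24 × Fin 24 :=
  ![![(10, 2), (17, 9), (0, 10), (19, 11), (18, 8), (21, 13), (20, 16), (23, 15), (4, 18), (1, 17), (2, 0), (3, 19), (22, 14), (5, 21), (12, 22), (7, 23), (6, 20), (9, 1), (8, 4), (11, 3), (16, 6), (13, 5), (14, 12), (15, 7)],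
   ![(18, 3), (23, 21), (20, 17), (0, 18), (19, 10), (14, 8), (15, 12), (22, 16), (5, 14), (13, 11), (4, 19), (9, 13), (6, 15), (11, 9), (8, 5), (12, 6), (7, 22), (2, 20), (3, 0), (10, 4), (17, 2), (1, 23), (16, 7), (21, 1)],
   ![(14, 4), (19, 16), (22, 18), (9, 6), (0, 14), (23, 20), (3, 9), (21, 11), (12, 10), (6, 3), (8, 12), (7, 21), (10, 8), (17, 15), (4, 0), (13, 17), (1, 19), (15, 13), (2, 22), (16, 1), (5, 23), (11, 7), (18, 2), (20, 5)],
   ![(21, 6), (22, 4), (23, 8), (17, 7), (1, 22), (19, 15), (0, 21), (3, 17), (2, 23), (18, 12), (16, 13), (20, 14), (9, 18), (10, 16), (11, 20), (5, 19), (13, 10), (7, 3), (12, 9), (15, 5), (14, 11), (6, 0), (4, 1), (8, 2)],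
   ![(16, 8), (15, 11), (6, 4), (21, 12), (2, 6), (9, 7), (4, 2), (5, 9), (0, 16), (7, 5), (20, 18), (1, 15), (3, 21), (22, 19), (23, 17), (11, 1), (8, 0), (14, 23), (10, 20), (13, 22), (18, 10), (12, 3), (19, 13), (17, 14)],
   ![(15, 9), (10, 7), (11, 5), (23, 13), (20, 12), (2, 11), (22, 8), (1, 10), (6, 22), (0, 15), (7, 1), (5, 2), (4, 20), (3, 23), (18, 16), (9, 0), (14, 18), (21, 19), (16, 14), (17, 21), (12, 4), (19, 17), (8, 6), (13, 3)],
   ![(22, 20), (5, 3), (16, 12), (1, 5), (13, 7), (3, 1), (14, 10), (4, 13), (17, 11), (23, 19), (6, 14), (8, 17), (2, 16), (7, 4), (10, 6), (21, 18), (12, 2), (11, 8), (15, 21), (9, 23), (0, 22), (18, 15), (20, 0), (19, 9)],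
   ![(13, 1), (0, 12), (15, 3), (2, 14), (17, 5), (4, 16), (19, 7), (6, 18), (21, 9), (8, 20), (23, 11), (10, 22), (1, 13), (12, 0), (3, 15), (14, 2), (5, 17), (16, 4), (7, 19), (18, 6), (9, 21), (20, 8), (11, 23), (22, 10)],
   ![(23, 11), (14, 2), (1, 13), (16, 4), (3, 15), (18, 6), (5, 17), (20, 8), (7, 19), (22, 10), (9, 21), (0, 12), (11, 23), (2, 14), (13, 1), (4, 16), (15, 3), (6, 18), (17, 5), (8, 20), (19, 7), (10, 22), (21, 9), (12, 0)],
   ![(17, 5), (20, 8), (19, 7), (22, 10), (21, 9), (0, 12), (23, 11), (2, 14), (1, 13), (4, 16), (3, 15), (6, 18), (5, 17), (8, 20), (7, 19), (10, 22), (9, 21), (12, 0), (11, 23), (14, 2), (13, 1), (16, 4), (15, 3), (18, 6)],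
   ![(19, 7), (18, 6), (21, 9), (20, 8), (23, 11), (22, 10), (1, 13), (0, 12), (3, 15), (2, 14), (5, 17), (4, 16), (7, 19), (6, 18), (9, 21), (8, 20), (11, 23), (10, 22), (13, 1), (12, 0), (15, 3), (14, 2), (17, 5), (16, 4)]]

/-- The removed perfect matching: `i ↔ i + 12`. -/
def Mg : SimpleGraph (Fin 24) := SimpleGraph.fromRel (fun a b => b = a + 12)

/-- The eleven 2-factors. -/
def Fct (i : Fin 11) : SimpleGraph (Fin 24) :=
  SimpleGraph.fromRel (fun a b => b = (nbrs i a).1 ∨ b = (nbrs i a).2)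

instance : DecidableRel Mg.Adj :=
  fun a b => decidable_of_iff' _ (SimpleGraph.fromRel_adj _ a b)

instance (i : Fin 11) : DecidableRel (Fct i).Adj :=
  fun a b => decidable_of_iff' _ (SimpleGraph.fromRel_adj _ a b)

instance (p : Fin 11 → Prop) [DecidablePred p] : Decidable (∃! i, p i) :=
  inferInstanceAs (Decidable (∃ i, p i ∧ ∀ j, p j → j = i))

/- ### Computing connected components via balls -/

section Ball

variable {V : Type*} [Fintype V] [DecidableEq V]

/-- The set of vertices reachable from `v` by a walk of length at most `k`. -/
def ball (H : SimpleGraph V) [DecidableRel H.Adj] (v : V) : ℕ → Finset V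
  | 0 => {v}
  | k + 1 => ball H v k ∪ (ball H v k).biUnion (fun u => H.neighborFinset u)

variable (H : SimpleGraph V) [DecidableRel H.Adj]

lemma self_mem_ball (v : V) (k : ℕ) : v ∈ ball H v k := by
  induction k with
  | zero => simp [ball]
  | succ k ih => simp only [ball, Finset.mem_union]; exact Or.inl ih

lemma reachable_of_mem_ball {v : V} {k : ℕ} :
    ∀ {u : V}, u ∈ ball H v k → H.Reachable v u := by
  induction k with
  | zero =>
      intro u h
      simp only [ball, Finset.mem_singleton] at h
      subst h
      exact SimpleGraph.Reachable.refl _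
  | succ k ih =>
      intro u h
      simp only [ball, Finset.mem_union, Finset.mem_biUnion] at h
      rcases h with h | ⟨w, hw, hadj⟩
      · exact ih h
      · exact (ih hw).trans
          (SimpleGraph.Adj.reachable ((H.mem_neighborFinset w u).1 hadj))

lemma walk_mem_ball {v : V} {k : ℕ} (hstab : ball H v (k + 1) = ball H v k) :
    ∀ {x u : V}, H.Walk x u → x ∈ ball H v k → u ∈ ball H v k := by
  intro x u w
  induction w with
  | nil => exact id
  | @cons a b c hadj _ ih =>
      intro ha
      apply ih
      have hb : b ∈ ball H v (k + 1) := by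
        simp only [ball, Finset.mem_union, Finset.mem_biUnion]
        exact Or.inr ⟨a, ha, (H.mem_neighborFinset a b).2 hadj⟩
      rwa [hstab] at hb

lemma supp_eq_ball {v : V} {k : ℕ} (hstab : ball H v (k + 1) = ball H v k) :
    (H.connectedComponentMk v).supp = ↑(ball H v k) := by
  ext u
  simp only [SimpleGraph.ConnectedComponent.mem_supp_iff, Finset.mem_coe]
  constructor
  · intro h
    have hr : H.Reachable v u := (SimpleGraph.ConnectedComponent.eq.1 h).symm
    exact walk_mem_ball H hstab hr.some (self_mem_ball H v k)
  · intro h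
    exact SimpleGraph.ConnectedComponent.eq.2 (reachable_of_mem_ball H h).symm

lemma supp_ncard_eq_ball {v : V} {k : ℕ} (hstab : ball H v (k + 1) = ball H v k) :
    (H.connectedComponentMk v).supp.ncard = (ball H v k).card := by
  rw [supp_eq_ball H hstab, Set.ncard_coe_finset]

lemma ncard_neighborSet (v : V) :
    (H.neighborSet v).ncard = (H.neighborFinset v).card := by
  rw [SimpleGraph.neighborFinset_def, Set.ncard_eq_toFinset_card']

end Ball

/- ### Verification of the construction -/

abbrev G24 : SimpleGraph (Fin 24) := (⊤ : SimpleGraph (Fin 24)) \ Mg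

lemma cycleFactor_of_checks (H : SimpleGraph (Fin 24)) [DecidableRel H.Adj] (n : ℕ)
    (hle : ∀ a b, H.Adj a b → G24.Adj a b)
    (hdeg : ∀ v, (H.neighborFinset v).card = 2)
    (hball : ∀ v, ball H v 3 = ball H v 2 ∧ (ball H v 2).card = n) :
    IsCycleFactor G24 H n := by
  refine ⟨⟨fun {a b} h => hle a b h, fun v => ?_⟩, fun v => ?_⟩
  · rw [ncard_neighborSet]; exact hdeg v
  · rw [supp_ncard_eq_ball H (hball v).1]; exact (hball v).2

/-- The sizes of the cycles in the eleven factors. -/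
def sz : Fin 11 → ℕ := ![3, 3, 3, 3, 3, 3, 3, 4, 4, 4, 4]

set_option maxRecDepth 1000000 in
set_option maxHeartbeats 4000000 in
lemma le_check : ∀ i : Fin 11, ∀ a b, (Fct i).Adj a b → G24.Adj a b := by decide

set_option maxRecDepth 1000000 in
set_option maxHeartbeats 4000000 in
lemma deg_check : ∀ i : Fin 11, ∀ v, ((Fct i).neighborFinset v).card = 2 := by decide

set_option maxRecDepth 1000000 in
set_option maxHeartbeats 12000000 in
lemma ball_check0 : ∀ i : Fin 11, (i : ℕ) < 4 → ∀ v,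
    ball (Fct i) v 3 = ball (Fct i) v 2 ∧ (ball (Fct i) v 2).card = sz i := by decide

set_option maxRecDepth 1000000 in
set_option maxHeartbeats 12000000 in
lemma ball_check1 : ∀ i : Fin 11, 4 ≤ (i : ℕ) → (i : ℕ) < 8 → ∀ v,
    ball (Fct i) v 3 = ball (Fct i) v 2 ∧ (ball (Fct i) v 2).card = sz i := by decide

set_option maxRecDepth 1000000 in
set_option maxHeartbeats 12000000 in
lemma ball_check2 : ∀ i : Fin 11, 8 ≤ (i : ℕ) → ∀ v,
    ball (Fct i) v 3 = ball (Fct i) v 2 ∧ (ball (Fct i) v 2).card = sz i := by decide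

lemma ball_check : ∀ i : Fin 11, ∀ v,
    ball (Fct i) v 3 = ball (Fct i) v 2 ∧ (ball (Fct i) v 2).card = sz i := by
  intro i v
  rcases lt_or_ge (i : ℕ) 4 with h | h
  · exact ball_check0 i h v
  · rcases lt_or_ge (i : ℕ) 8 with h' | h'
    · exact ball_check1 i h h' v
    · exact ball_check2 i h' v

lemma factor_check (i : Fin 11) : IsCycleFactor G24 (Fct i) (sz i) :=
  cycleFactor_of_checks (Fct i) (sz i) (le_check i) (deg_check i) (ball_check i)

set_option maxRecDepth 1000000 in
set_option maxHeartbeats 12000000 in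
lemma unique_check : ∀ a b : Fin 24, G24.Adj a b → ∃! i : Fin 11, (Fct i).Adj a b := by
  decide

set_option maxRecDepth 1000000 in
lemma M_check : ∀ v, (Mg.neighborFinset v).card = 1 := by decide

lemma sz_lo : ∀ i : Fin 11, (i : ℕ) < 7 → sz i = 3 := by decide
lemma sz_hi : ∀ i : Fin 11, 7 ≤ (i : ℕ) → sz i = 4 := by decide

/-- HWP(24; 3, 4; 7, 4) has a solution: the complete graph `K_24` minus a perfect matching
`I` admits a 2-factorization with exactly 7 triangle-factors and 4 quadrangle-factors. -/
theorem hwp24_7_4 :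
    ∃ M : SimpleGraph (Fin 24), (∀ v : Fin 24, (M.neighborSet v).ncard = 1) ∧
      ∃ F : Fin (7 + 4) → SimpleGraph (Fin 24),
        IsHWPSolution ((⊤ : SimpleGraph (Fin 24)) \ M) 7 4 F := by
  refine ⟨Mg, fun v => ?_, Fct, ?_, ?_, ?_⟩
  · rw [ncard_neighborSet]; exact M_check v
  · intro i hi
    exact sz_lo i hi ▸ factor_check i
  · intro i hi
    exact sz_hi i hi ▸ factor_check i
  · refine Sym2.ind (fun a b hab => ?_)
    rw [SimpleGraph.mem_edgeSet] at hab
    obtain ⟨i, hi, hu⟩ := unique_check a b hab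
    exact ⟨i, SimpleGraph.mem_edgeSet _ |>.2 hi,
      fun j hj => hu j (SimpleGraph.mem_edgeSet _ |>.1 hj)⟩
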